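/- Let A be an affine integral domain over a field k of transcendence degree 1 over k, and suppose A admits a non-trivial exponential map φ. Then A is isomorphic, as an algebra over the algebraic closure k̃ of k in A, to the polynomial ring in one variable over k̃, and A^φ = k̃. -/

import Mathlib

open Polynomial

/-- A `k`-algebra homomorphism `φ : A → A[U]` is an *exponential map* if evaluating `U` at `0`
gives the identity and `φ_V φ_U = φ_{V+U}` (comultiplicativity). -/
def IsExponentialMap {k A : Type*} [CommSemiring k] [CommSemiring A] [Algebra k A]
    (φ : A →ₐ[k] A[X]) : Prop :=
  (∀ a : A, (φ a).eval 0 = a) ∧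
  (∀ a : A, (φ a).map (φ : A →+* A[X]) =
      (φ a).eval₂ ((C : A[X] →+* A[X][X]).comp (C : A →+* A[X])) (C X + X))

/-- The ring of invariants `A^φ = {a ∈ A | φ(a) = a}` of a `k`-algebra map `φ : A → A[U]`,
as a subalgebra of `A`. -/
def expInv {k A : Type*} [CommSemiring k] [CommSemiring A] [Algebra k A]
    (φ : A →ₐ[k] A[X]) : Subalgebra k A where
  carrier := {a | φ a = C a}
  mul_mem' := fun {a b} ha hb => by
    simp only [Set.mem_setOf_eq] at *
    rw [map_mul, ha, hb, ← C_mul]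
  add_mem' := fun {a b} ha hb => by
    simp only [Set.mem_setOf_eq] at *
    rw [map_add, ha, hb, ← C_add]
  algebraMap_mem' := fun r => by
    simp only [Set.mem_setOf_eq, AlgHom.commutes, Polynomial.algebraMap_apply]

/-- An exponential map is non-trivial if its ring of invariants is a proper subring. -/
def IsNontrivialExpMap {k A : Type*} [CommSemiring k] [CommSemiring A] [Algebra k A]
    (φ : A →ₐ[k] A[X]) : Prop :=
  IsExponentialMap φ ∧ expInv φ ≠ ⊤

/-- The Derksen invariant: the `k`-subalgebra of `A` generated by the invariants of all
non-trivial exponential maps on `A`. -/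
def DerksenInvariant (k A : Type*) [CommSemiring k] [CommSemiring A] [Algebra k A] :
    Subalgebra k A :=
  Algebra.adjoin k {a : A | ∃ φ : A →ₐ[k] A[X], IsNontrivialExpMap φ ∧ a ∈ expInv φ}

/-- The transcendence degree of a commutative `k`-algebra `A`: the supremum of the
cardinalities of algebraically independent subsets of `A`. -/
noncomputable def trdeg (k A : Type*) [CommRing k] [CommRing A] [Algebra k A] : Cardinal :=
  ⨆ s : {s : Set A // AlgebraicIndependent k ((↑) : s → A)}, Cardinal.mk s.1
section Aux

open Polynomial Finset

set_option linter.unusedSectionVars false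
variable {k A : Type*} [Field k] [CommRing A] [IsDomain A] [Algebra k A]
variable (φ : A →ₐ[k] A[X])

theorem mem_expInv_iff {a : A} : a ∈ expInv φ ↔ φ a = C a := Iff.rfl

variable {φ} (hφ : IsExponentialMap φ)
include hφ

theorem expInj : Function.Injective φ := fun a b h => by
  rw [← hφ.1 a, ← hφ.1 b, h]

theorem inv_of_natDegree_zero {a : A} (h : (φ a).natDegree = 0) : φ a = C a := by
  obtain ⟨c, hc⟩ := Polynomial.natDegree_eq_zero.mp h
  have : c = a := by rw [← hφ.1 a, ← hc, eval_C]
  rw [← hc, this]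

theorem key_coeff (a : A) (i : ℕ) :
    φ ((φ a).coeff i) = ∑ j ∈ Finset.range ((φ a).natDegree + 1),
      C ((φ a).coeff j) * (X ^ (j - i) * (j.choose i : A[X])) := by
  have h := congrArg (fun p => Polynomial.coeff p i) (hφ.2 a)
  simp only [coeff_map] at h
  rw [eval₂_eq_sum_range, Polynomial.finset_sum_coeff] at h
  rw [show ((φ : A →+* A[X]) ((φ a).coeff i) : A[X]) = φ ((φ a).coeff i) from rfl] at h
  rw [h]
  refine Finset.sum_congr rfl fun j _ => ?_
  rw [RingHom.comp_apply, coeff_C_mul, add_comm (C X) X, coeff_X_add_C_pow]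

end Aux
section Aux2

open Polynomial Finset

set_option linter.unusedSectionVars false
variable {k A : Type*} [Field k] [CommRing A] [IsDomain A] [Algebra k A]
variable {φ : A →ₐ[k] A[X]}

theorem term_coeff (c : A) (ch e s : ℕ) :
    (C c * (X ^ e * ((ch : A[X])))).coeff s = if s = e then c * ch else 0 := by
  rw [← Polynomial.C_eq_natCast, mul_comm (X ^ e), ← mul_assoc, ← C_mul, coeff_C_mul,
    coeff_X_pow, mul_ite, mul_one, mul_zero]

variable (hφ : IsExponentialMap φ)
include hφ

theorem lead_inv (a : A) :
    φ ((φ a).coeff (φ a).natDegree) = C ((φ a).coeff (φ a).natDegree) := by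
  rw [key_coeff hφ a]
  rw [Finset.sum_eq_single ((φ a).natDegree)]
  · simp
  · intro j hj hne
    have hjlt : j < (φ a).natDegree :=
      lt_of_le_of_ne (Nat.lt_succ_iff.mp (Finset.mem_range.mp hj)) hne
    rw [Nat.choose_eq_zero_of_lt hjlt]
    simp
  · intro h; exact absurd (Finset.self_mem_range_succ _) h

theorem deg_coeff_le (a : A) (i : ℕ) :
    (φ ((φ a).coeff i)).natDegree ≤ (φ a).natDegree - i := by
  rw [key_coeff hφ a i]
  refine Polynomial.natDegree_sum_le_of_forall_le _ _ fun j hj => ?_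
  refine le_trans (Polynomial.natDegree_mul_le) ?_
  rw [natDegree_C, zero_add]
  refine le_trans (Polynomial.natDegree_mul_le) ?_
  rw [natDegree_X_pow, natDegree_natCast, add_zero]
  exact Nat.sub_le_sub_right (Nat.lt_succ_iff.mp (Finset.mem_range.mp hj)) i

theorem coeff_top (a : A) {i : ℕ} (hi : i ≤ (φ a).natDegree) :
    (φ ((φ a).coeff i)).coeff ((φ a).natDegree - i) =
      (φ a).coeff (φ a).natDegree * ((φ a).natDegree.choose i : A) := by
  rw [key_coeff hφ a i, Polynomial.finset_sum_coeff]
  rw [Finset.sum_eq_single ((φ a).natDegree)]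
  · rw [term_coeff, if_pos rfl]
  · intro j hj hne
    rw [term_coeff]
    split_ifs with hcond
    · rcases lt_or_ge j i with hji | hji
      · rw [Nat.choose_eq_zero_of_lt hji]; simp
      · exfalso; apply hne
        have h1 : (φ a).natDegree - i + i = (φ a).natDegree := Nat.sub_add_cancel hi
        have h2 : j - i + i = j := Nat.sub_add_cancel hji
        rw [← h2, ← hcond, h1]
    · rfl
  · intro h; exact absurd (Finset.self_mem_range_succ _) h

theorem bin_vanish (a : A) {i s : ℕ} (hi : 1 ≤ i) (hs : 1 ≤ s)
    (hinv : φ ((φ a).coeff i) = C ((φ a).coeff i)) :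
    (φ a).coeff (s + i) * ((s + i).choose i : A) = 0 := by
  by_cases hle : s + i ≤ (φ a).natDegree
  · have h := congrArg (fun p => Polynomial.coeff p s) (key_coeff hφ a i)
    rw [hinv] at h
    simp only [Polynomial.finset_sum_coeff, coeff_C,
      if_neg (by omega : ¬ s = 0)] at h
    rw [Finset.sum_eq_single (s + i)] at h
    · rw [term_coeff, if_pos (by omega : s = s + i - i)] at h
      exact h.symm
    · intro j hj hne
      rw [term_coeff]
      split_ifs with hcond
      · rcases lt_or_ge j i with hji | hji
        · exfalso; omega
        · exfalso; apply hne; omega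
      · rfl
    · intro h'
      exact absurd (Finset.mem_range.mpr (by omega)) h'
  · rw [Polynomial.coeff_eq_zero_of_natDegree_lt (by omega), zero_mul]

end Aux2
section Aux3

open Polynomial Finset

set_option linter.unusedSectionVars false
variable {k A : Type*} [Field k] [CommRing A] [IsDomain A] [Algebra k A]
variable {φ : A →ₐ[k] A[X]}

theorem natDegree_zero_of_comp_eq_zero {r g : A[X]} (hr : 1 ≤ r.natDegree)
    (h : r.comp g = 0) : g.natDegree = 0 := by
  by_contra hg
  have := Polynomial.natDegree_comp (p := r) (q := g)
  rw [h, Polynomial.natDegree_zero] at this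
  have := this.symm
  rw [Nat.mul_eq_zero] at this
  omega

variable (hφ : IsExponentialMap φ)
include hφ

theorem phi_eval_of_inv_coeffs {r : A[X]} (hr : ∀ i, φ (r.coeff i) = C (r.coeff i))
    (b : A) : φ (r.eval b) = r.comp (φ b) := by
  conv_lhs => rw [Polynomial.eval_eq_sum_range]
  rw [map_sum, Polynomial.comp, Polynomial.eval₂_eq_sum_range]
  refine Finset.sum_congr rfl fun i _ => ?_
  rw [map_mul, map_pow, hr i]

theorem integralClosure_le_expInv : integralClosure k A ≤ expInv φ := by
  intro a ha
  obtain ⟨P, Pmonic, hP⟩ := ha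
  rw [mem_expInv_iff]
  by_cases h0 : P.natDegree = 0
  · exfalso
    have : P = 1 := Pmonic.natDegree_eq_zero.mp h0
    rw [this] at hP
    simp at hP
  · set Q : A[X] := P.map (algebraMap k A) with hQ
    have hdeg : 1 ≤ Q.natDegree := by
      rw [hQ, Pmonic.natDegree_map]; omega
    have hcomp : Q.comp (φ a) = 0 := by
      have h1 : φ (Polynomial.aeval a P) = Polynomial.aeval (φ a) P :=
        (Polynomial.aeval_algHom_apply φ a P).symm
      rw [Polynomial.aeval_def, hP, map_zero] at h1
      rw [hQ, Polynomial.comp, Polynomial.eval₂_map, ← h1.symm]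
      rfl
    exact inv_of_natDegree_zero hφ (natDegree_zero_of_comp_eq_zero hdeg hcomp)

end Aux3
section Aux4

open Polynomial Finset

set_option linter.unusedSectionVars false
variable {k A : Type*} [Field k] [CommRing A] [IsDomain A] [Algebra k A]
variable {φ : A →ₐ[k] A[X]} (hφ : IsExponentialMap φ)
include hφ

theorem expInv_le_integralClosure (htd : trdeg k A = 1) (hnt : expInv φ ≠ ⊤) :
    expInv φ ≤ integralClosure k A := by
  intro a ha
  rw [mem_integralClosure_iff]
  by_contra hna
  have htr : Transcendental k a := fun halg =>
    hna ((isAlgebraic_iff_isIntegral).mp halg)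
  obtain ⟨b, hb⟩ : ∃ b : A, b ∉ expInv φ := by
    by_contra h
    push_neg at h
    exact hnt (Algebra.eq_top_iff.mpr h)
  -- the pair (a, b) is algebraically dependent
  have hsing : AlgebraicIndependent k (fun _ : Unit => a) :=
    algebraicIndependent_unique_type_iff.mpr htr
  have hopt : ¬ AlgebraicIndependent k (fun o : Option Unit => o.elim b fun _ => a) := by
    intro hind
    have hrange : Set.range (fun o : Option Unit => o.elim b fun _ => a) = {b, a} := by
      ext x
      constructor
      · rintro ⟨o, rfl⟩
        cases o with
        | none => exact Or.inl rfl
        | some u => exact Or.inr rfl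
      · rintro (rfl | rfl)
        exacts [⟨none, rfl⟩, ⟨some (), rfl⟩]
    have hsub : AlgebraicIndependent k ((↑) : (({b, a} : Set A)) → A) := by
      have := hind.to_subtype_range
      rwa [hrange] at this
    have hle : Cardinal.mk ({b, a} : Set A) ≤ trdeg k A := by
      exact le_ciSup (Cardinal.bddAbove_range _)
        (⟨({b, a} : Set A), hsub⟩ : {s : Set A // AlgebraicIndependent k ((↑) : s → A)})
    have hba : b ∉ ({a} : Set A) := by
      intro h
      rw [Set.mem_singleton_iff] at h
      exact hb (h ▸ ha)
    rw [Cardinal.mk_insert hba, Cardinal.mk_singleton, htd] at hle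
    norm_num at hle
  have halg : IsAlgebraic (Algebra.adjoin k (Set.range fun _ : Unit => a)) b := by
    by_contra h
    exact hopt ((hsing.option_iff_transcendental b).mpr h)
  set R := Algebra.adjoin k (Set.range fun _ : Unit => a) with hR
  obtain ⟨q, hq0, hqb⟩ := halg
  have hRle : R ≤ expInv φ := by
    rw [hR]
    refine Algebra.adjoin_le ?_
    rintro _ ⟨⟨⟩, rfl⟩
    exact ha
  set r : A[X] := q.map (algebraMap ↥R A) with hr
  have hinj : Function.Injective (algebraMap ↥R A) := Subtype.coe_injective
  have hr0 : r ≠ 0 := by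
    rw [hr]
    exact (Polynomial.map_ne_zero_iff hinj).mpr hq0
  have heval : r.eval b = 0 := by
    rw [hr, Polynomial.eval_map, ← Polynomial.aeval_def, hqb]
  have hcoeff : ∀ i, φ (r.coeff i) = C (r.coeff i) := by
    intro i
    rw [hr, Polynomial.coeff_map]
    exact hRle (q.coeff i).2
  have hdeg : 1 ≤ r.natDegree := by
    by_contra h
    have h0 : r.natDegree = 0 := by omega
    have := Polynomial.eq_C_of_natDegree_eq_zero h0
    rw [this, eval_C] at heval
    rw [this, heval, map_zero] at hr0
    exact hr0 rfl
  have hcomp : r.comp (φ b) = 0 := by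
    rw [← phi_eval_of_inv_coeffs hφ hcoeff b, heval, map_zero]
  exact hb (inv_of_natDegree_zero hφ (natDegree_zero_of_comp_eq_zero hdeg hcomp))

end Aux4
section Aux5

open Polynomial Finset

set_option linter.unusedSectionVars false
variable {k A : Type*} [Field k] [CommRing A] [IsDomain A] [Algebra k A]
variable {φ : A →ₐ[k] A[X]} (hφ : IsExponentialMap φ)
variable {t : A} {n : ℕ}

include hφ

theorem choose_n_vanish (hn : 0 < n) (hdeg_t : (φ t).natDegree = n)
    (hmin : ∀ a : A, (φ a).natDegree ≠ 0 → n ≤ (φ a).natDegree)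
    {i : ℕ} (h0i : 0 < i) (hin : i < n) : ((n.choose i : A)) = 0 := by
  have hφt : φ t ≠ 0 := fun h => by rw [h, natDegree_zero] at hdeg_t; omega
  have hcn : (φ t).coeff n ≠ 0 := by
    rw [← hdeg_t]; exact mt leadingCoeff_eq_zero.mp hφt
  have hci : φ ((φ t).coeff i) = C ((φ t).coeff i) := by
    refine inv_of_natDegree_zero hφ ?_
    by_contra h
    have h1 := hmin _ h
    have h2 := deg_coeff_le hφ t i
    rw [hdeg_t] at h2
    omega
  have := bin_vanish hφ t (i := i) (s := n - i) (by omega) (by omega) hci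
  rw [show n - i + i = n from by omega] at this
  rcases mul_eq_zero.mp this with h | h
  · exact absurd h hcn
  · exact h

theorem X_add_one_pow_eq (hn : 0 < n) (hdeg_t : (φ t).natDegree = n)
    (hmin : ∀ a : A, (φ a).natDegree ≠ 0 → n ≤ (φ a).natDegree) :
    ((X : A[X]) + 1) ^ n = X ^ n + 1 := by
  ext i
  rw [coeff_X_add_one_pow, coeff_add, coeff_X_pow, coeff_one]
  rcases lt_trichotomy i n with h | rfl | h
  · rcases Nat.eq_zero_or_pos i with rfl | h0
    · rw [Nat.choose_zero_right, Nat.cast_one, if_neg (by omega : ¬ (0:ℕ) = n),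
        if_pos rfl, zero_add]
    · rw [choose_n_vanish hφ hn hdeg_t hmin h0 h, if_neg (by omega), if_neg (by omega)]
      norm_num
  · simp [Nat.choose_self, if_neg (by omega : ¬ i = 0)]
  · rw [Nat.choose_eq_zero_of_lt h, if_neg (by omega), if_neg (by omega)]
    norm_num

theorem choose_mod_one (hn : 0 < n) (hdeg_t : (φ t).natDegree = n)
    (hmin : ∀ a : A, (φ a).natDegree ≠ 0 → n ≤ (φ a).natDegree)
    (q ℓ : ℕ) (hℓ : ℓ < n) : (((n * q + ℓ).choose ℓ : ℕ) : A) = 1 := by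
  obtain ⟨h, hh⟩ : (X ^ n : A[X]) ∣ ((X ^ n + 1) ^ q - 1) := by
    have := sub_dvd_pow_sub_pow (X ^ n + 1 : A[X]) 1 q
    simpa using this
  have hh' : ((X : A[X]) ^ n + 1) ^ q = 1 + X ^ n * h := by
    rw [← hh]; ring
  have hcalc : (((X : A[X]) + 1) ^ (n * q + ℓ)).coeff ℓ =
      ((1 + X ^ n * h) * (X + 1) ^ ℓ).coeff ℓ := by
    rw [pow_add, pow_mul, X_add_one_pow_eq hφ hn hdeg_t hmin, hh']
  rw [coeff_X_add_one_pow] at hcalc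
  rw [hcalc, add_mul, one_mul, coeff_add, coeff_X_add_one_pow, Nat.choose_self,
    Nat.cast_one, mul_assoc, mul_comm (X ^ n), coeff_mul_X_pow', if_neg (by omega)]
  norm_num

theorem deg_dvd (hn : 0 < n) (hdeg_t : (φ t).natDegree = n)
    (hmin : ∀ a : A, (φ a).natDegree ≠ 0 → n ≤ (φ a).natDegree)
    (a : A) : n ∣ (φ a).natDegree := by
  set m := (φ a).natDegree with hm
  by_contra hndvd
  have hℓ0 : m % n ≠ 0 := fun h => hndvd (Nat.dvd_of_mod_eq_zero h)
  have hm0 : m ≠ 0 := by intro h; rw [h] at hℓ0; simp at hℓ0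
  have hmn : n ≤ m := hmin a hm0
  have hℓn : m % n < n := Nat.mod_lt _ hn
  set i := m - m % n with hi
  have him : i ≤ m := by omega
  have hcm : (φ a).coeff m ≠ 0 := by
    have hφa : φ a ≠ 0 := fun h => hm0 (by rw [hm, h, natDegree_zero])
    rw [hm]; exact mt leadingCoeff_eq_zero.mp hφa
  have hch : ((m.choose i : ℕ) : A) = 1 := by
    have h2 := choose_mod_one hφ hn hdeg_t hmin (m / n) (m % n) hℓn
    rw [Nat.div_add_mod m n] at h2
    rw [hi, Nat.choose_symm (by omega : m % n ≤ m)]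
    exact h2
  have hct := coeff_top hφ a him
  rw [← hm, hch, mul_one] at hct
  have hne : (φ ((φ a).coeff i)).natDegree ≠ 0 := by
    intro h
    have := Polynomial.le_natDegree_of_ne_zero (hct ▸ hcm)
    omega
  have h1 := hmin _ hne
  have h2 := deg_coeff_le hφ a i
  rw [← hm] at h2
  omega

end Aux5
set_option maxHeartbeats 1000000 in
set_option synthInstance.maxHeartbeats 400000 in
open Polynomial in
/-- **Lemma 2.1(v)**: if an affine domain `A` over `k` has transcendence degree one over `k`
and admits a non-trivial exponential map `φ`, then `A` is a polynomial ring in one variable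
over the algebraic closure `k̃` of `k` in `A`, and `A^φ = k̃`. -/
theorem trdeg_one_of_expMap {k A : Type*} [Field k] [CommRing A] [IsDomain A]
    [Algebra k A] [Algebra.FiniteType k A] (htd : trdeg k A = 1)
    (φ : A →ₐ[k] A[X]) (hφ : IsExponentialMap φ) (hnt : expInv φ ≠ ⊤) :
    Nonempty (A ≃ₐ[↥(integralClosure k A)] Polynomial ↥(integralClosure k A)) ∧
      expInv φ = integralClosure k A := by
  classical
  have hE : expInv φ = integralClosure k A :=
    le_antisymm (expInv_le_integralClosure hφ htd hnt) (integralClosure_le_expInv hφ)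
  refine ⟨?_, hE⟩
  have hφF : ∀ x : ↥(integralClosure k A), φ ↑x = C (x : A) := by
    intro x
    exact hE.ge x.2
  have halgmap : ∀ x : ↥(integralClosure k A),
      algebraMap ↥(integralClosure k A) A x = ↑x := fun x => rfl
  have hF : IsField ↥(integralClosure k A) :=
    isField_of_isIntegral_of_isField' (Field.toIsField k)
  -- choose an element of minimal positive degree
  obtain ⟨b₀, hb₀⟩ : ∃ b : A, b ∉ expInv φ := by
    by_contra h
    push_neg at h
    exact hnt (Algebra.eq_top_iff.mpr h)
  have hb₀deg : (φ b₀).natDegree ≠ 0 := fun h => hb₀ (inv_of_natDegree_zero hφ h)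
  have hex : ∃ m : ℕ, m ≠ 0 ∧ ∃ a : A, (φ a).natDegree = m := ⟨_, hb₀deg, b₀, rfl⟩
  set n := Nat.find hex with hn
  obtain ⟨hn0', t₀, ht₀'⟩ := Nat.find_spec hex
  have hn0 : n ≠ 0 := hn0'
  have ht₀ : (φ t₀).natDegree = n := ht₀'
  have hnpos : 0 < n := Nat.pos_of_ne_zero hn0
  have hmin : ∀ a : A, (φ a).natDegree ≠ 0 → n ≤ (φ a).natDegree := fun a ha =>
    Nat.find_min' hex ⟨ha, a, rfl⟩
  -- normalize the leading coefficient
  have hφt₀ : φ t₀ ≠ 0 := fun h => by rw [h, natDegree_zero] at ht₀; omega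
  have hlam := lead_inv hφ t₀
  rw [ht₀] at hlam
  have hlamF : (φ t₀).coeff n ∈ integralClosure k A := hE.le hlam
  have hlamne : (φ t₀).coeff n ≠ 0 := by
    rw [← ht₀]
    exact mt leadingCoeff_eq_zero.mp hφt₀
  obtain ⟨μF, hμF⟩ := hF.mul_inv_cancel
    (show (⟨(φ t₀).coeff n, hlamF⟩ : ↥(integralClosure k A)) ≠ 0 from
      fun h => hlamne (congrArg Subtype.val h))
  have hmulinv : (φ t₀).coeff n * (μF : A) = 1 := by
    have h := Subtype.ext_iff.mp hμF
    simpa using h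
  have hμinv : φ (μF : A) = C (μF : A) := hφF μF
  have hμne : (μF : A) ≠ 0 := by
    intro h
    rw [h, mul_zero] at hmulinv
    exact zero_ne_one hmulinv
  set t := (μF : A) * t₀ with htdef
  have hφt : φ t = C (μF : A) * φ t₀ := by rw [htdef, map_mul, hμinv]
  have hdeg_t : (φ t).natDegree = n := by
    rw [hφt, natDegree_C_mul hμne, ht₀]
  have hmonic : (φ t).Monic := by
    have h1 : (φ t).coeff n = 1 := by
      rw [hφt, coeff_C_mul, mul_comm]
      exact hmulinv
    rw [Polynomial.Monic, Polynomial.leadingCoeff, hdeg_t]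
    exact h1
  -- the evaluation homomorphism
  have haeval : ∀ f : Polynomial ↥(integralClosure k A),
      φ (Polynomial.aeval t f) = ∑ i ∈ Finset.range (f.natDegree + 1),
        C ((f.coeff i : A)) * (φ t) ^ i := by
    intro f
    rw [Polynomial.aeval_def, Polynomial.eval₂_eq_sum_range, map_sum]
    refine Finset.sum_congr rfl fun i _ => ?_
    rw [map_mul, map_pow, halgmap, hφF]
  have hcoefftop : ∀ f : Polynomial ↥(integralClosure k A),
      (φ (Polynomial.aeval t f)).coeff (n * f.natDegree) = (f.coeff f.natDegree : A) := by
    intro f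
    rw [haeval f, Polynomial.finset_sum_coeff]
    rw [Finset.sum_eq_single f.natDegree]
    · rw [coeff_C_mul]
      have h1 : ((φ t) ^ f.natDegree).natDegree = n * f.natDegree := by
        rw [hmonic.natDegree_pow, hdeg_t, mul_comm]
      rw [← h1, (hmonic.pow _).coeff_natDegree, mul_one]
    · intro i hi hne
      have hilt : i < f.natDegree :=
        lt_of_le_of_ne (Nat.lt_succ_iff.mp (Finset.mem_range.mp hi)) hne
      refine Polynomial.coeff_eq_zero_of_natDegree_lt ?_
      refine lt_of_le_of_lt (Polynomial.natDegree_C_mul_le _ _) ?_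
      rw [hmonic.natDegree_pow, hdeg_t, mul_comm i n]
      exact mul_lt_mul_of_pos_left hilt hnpos
    · intro h; exact absurd (Finset.self_mem_range_succ _) h
  -- injectivity
  have hinj : Function.Injective (Polynomial.aeval t :
      Polynomial ↥(integralClosure k A) →ₐ[↥(integralClosure k A)] A) := by
    rw [injective_iff_map_eq_zero]
    intro f hf
    by_contra hf0
    have h1 := hcoefftop f
    rw [hf, map_zero, Polynomial.coeff_zero] at h1
    have h2 : f.coeff f.natDegree ≠ 0 := by
      rw [Polynomial.coeff_natDegree]
      exact Polynomial.leadingCoeff_ne_zero.mpr hf0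
    exact h2 (by
      apply Subtype.ext
      exact h1.symm)
  -- surjectivity
  have hsurj : ∀ m : ℕ, ∀ a : A, (φ a).natDegree = m →
      ∃ f : Polynomial ↥(integralClosure k A), Polynomial.aeval t f = a := by
    intro m
    induction m using Nat.strong_induction_on with
    | _ m IH =>
      intro a hma
      by_cases hm0 : m = 0
      · have hainv : φ a = C a := inv_of_natDegree_zero hφ (by rw [hma, hm0])
        have haF : a ∈ integralClosure k A := hE.le hainv
        refine ⟨C ⟨a, haF⟩, ?_⟩
        rw [Polynomial.aeval_C, halgmap]
      · have hdvd : n ∣ m := hma ▸ deg_dvd hφ hnpos hdeg_t hmin a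
        obtain ⟨q, hq⟩ := hdvd
        have hφa : φ a ≠ 0 := fun h => hm0 (by rw [← hma, h, natDegree_zero])
        have hcinv := lead_inv hφ a
        rw [hma] at hcinv
        have hcF : (φ a).coeff m ∈ integralClosure k A := hE.le hcinv
        set c := (φ a).coeff m with hc
        set b := a - c * t ^ q with hb
        have hφb : φ b = φ a - C c * (φ t) ^ q := by
          rw [hb, map_sub, map_mul, hcinv, map_pow]
        have htqdeg : ((φ t) ^ q).natDegree = m := by
          rw [hmonic.natDegree_pow, hdeg_t, mul_comm, ← hq]
        have hcoef : (φ b).coeff m = 0 := by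
          rw [hφb, Polynomial.coeff_sub, coeff_C_mul, ← htqdeg,
            (hmonic.pow q).coeff_natDegree, mul_one, htqdeg, ← hc, sub_self]
        have hble : (φ b).natDegree ≤ m := by
          rw [hφb]
          refine le_trans (Polynomial.natDegree_sub_le _ _) ?_
          rw [hma]
          refine max_le (le_refl _) ?_
          refine le_trans (Polynomial.natDegree_C_mul_le _ _) ?_
          rw [htqdeg]
        by_cases hb0 : φ b = 0
        · have hbz : b = 0 := by
            rw [← hφ.1 b, hb0, Polynomial.eval_zero]
          refine ⟨C ⟨c, hcF⟩ * X ^ q, ?_⟩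
          simp only [map_mul, map_pow, Polynomial.aeval_C, Polynomial.aeval_X]
          rw [halgmap]
          have : a = c * t ^ q := by
            have := sub_eq_zero.mp (hb ▸ hbz)
            exact this
          exact this.symm
        · have hbne : (φ b).natDegree ≠ m := by
            intro h
            have := Polynomial.coeff_natDegree (p := φ b)
            rw [h, hcoef] at this
            exact hb0 (Polynomial.leadingCoeff_eq_zero.mp this.symm)
          have hblt : (φ b).natDegree < m := lt_of_le_of_ne hble hbne
          obtain ⟨fb, hfb⟩ := IH _ hblt b rfl
          refine ⟨fb + C ⟨c, hcF⟩ * X ^ q, ?_⟩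
          simp only [map_add, map_mul, map_pow, Polynomial.aeval_C, Polynomial.aeval_X]
          rw [halgmap, hfb, hb]
          ring
  exact ⟨(AlgEquiv.ofBijective
    (Polynomial.aeval t : Polynomial ↥(integralClosure k A) →ₐ[↥(integralClosure k A)] A)
    ⟨hinj, fun a => hsurj (φ a).natDegree a rfl⟩).symm⟩
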